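/- Let X ~ Binomial(n, p) with n ≥ 1 and p ∈ [0,1]. Let k_med = min{k : P(X ≤ k) ≥ 1/2} be the lower median. Then |k_med - np| ≤ 1. -/

import Mathlib

/-- CDF of the Binomial(n,p) distribution. -/
noncomputable def binomCdf (n : ℕ) (p : ℝ) (k : ℕ) : ℝ :=
  ∑ i ∈ Finset.range (k + 1), (n.choose i : ℝ) * p ^ i * (1 - p) ^ (n - i)



lemma binomCdf_self (n : ℕ) (p : ℝ) : binomCdf n p n = 1 := by
  have h := add_pow p (1 - p) n
  simp only [add_sub_cancel, one_pow] at h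
  rw [binomCdf]
  have e : ∑ i ∈ Finset.range (n+1), (n.choose i:ℝ) * p^i * (1-p)^(n-i)
       = ∑ m ∈ Finset.range (n+1), p^m * (1-p)^(n-m) * (n.choose m:ℝ) :=
    Finset.sum_congr rfl (fun i _ => by ring)
  rw [e, ← h]

lemma binomCdf_one (n k : ℕ) (hk : k < n) : binomCdf n 1 k = 0 := by
  apply Finset.sum_eq_zero
  intro i hi
  simp only [Finset.mem_range] at hi
  have : (1 - (1:ℝ)) ^ (n - i) = 0 := by
    rw [sub_self, zero_pow]; omega
  rw [this, mul_zero]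

-- Nat pairing lemma
lemma nat_pairing (m μ : ℕ) (hμ : 1 ≤ μ) (h2 : 2*μ ≤ m) :
    ∀ j, j < μ → (m.choose (μ-1-j)) * (m-μ)^(2*j+1) ≤ (m.choose (μ+j)) * μ^(2*j+1) := by
  intro j
  induction j with
  | zero =>
    intro _
    have h := Nat.choose_succ_right_eq m (μ-1)
    have hμ1 : μ - 1 + 1 = μ := by omega
    rw [hμ1] at h
    have e : m - (μ-1) = m - μ + 1 := by omega
    rw [e] at h
    norm_num
    calc m.choose (μ-1) * (m-μ) ≤ m.choose (μ-1) * (m-μ+1) := by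
          exact Nat.mul_le_mul_left _ (by omega)
      _ = m.choose μ * μ := h.symm
  | succ j ih =>
    intro hj
    have ihj := ih (by omega)
    have id1 : m.choose (μ+j+1) * (μ+j+1) = m.choose (μ+j) * (m-μ-j) := by
      have := Nat.choose_succ_right_eq m (μ+j)
      rw [this]; congr 1; omega
    have id2 : m.choose (μ-1-j) * (μ-1-j) = m.choose (μ-2-j) * (m-μ+2+j) := by
      have := Nat.choose_succ_right_eq m (μ-2-j)
      have e1 : μ - 2 - j + 1 = μ - 1 - j := by omega
      rw [e1] at this
      rw [this]; congr 1; omega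
    have key : (μ-1-j) * (μ+j+1) * (m-μ)^2 ≤ (m-μ-j) * (m-μ+2+j) * μ^2 := by
      zify [show 1 ≤ μ by omega, show j ≤ μ-1 by omega, show μ ≤ m by omega,
        show j ≤ m - μ by omega]
      have hba : (μ:ℤ) ≤ (m:ℤ) - μ := by push_cast; omega
      have hj' : (j:ℤ) + 1 < μ := by exact_mod_cast Nat.cast_lt.mpr hj
      nlinarith [mul_nonneg (mul_nonneg (sq_nonneg ((j:ℤ)+1)) (sub_nonneg.mpr hba))
        (by nlinarith : (0:ℤ) ≤ ((m:ℤ)-μ) + μ), sq_nonneg ((μ:ℤ))]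
    rw [show μ-1-(j+1) = μ-2-j from by omega, show μ+(j+1)=μ+j+1 from by omega,
      show 2*(j+1)+1 = 2*j+3 from by omega]
    have hD : 0 < (μ+j+1) * ((m-μ+2+j)) := by positivity
    apply Nat.le_of_mul_le_mul_left _ hD
    calc (μ+j+1) * (m-μ+2+j) * (m.choose (μ-2-j) * (m-μ)^(2*j+3))
        = (m.choose (μ-2-j) * (m-μ+2+j)) * ((μ+j+1) * (m-μ)^(2*j+3)) := by ring
      _ = (m.choose (μ-1-j) * (μ-1-j)) * ((μ+j+1) * (m-μ)^(2*j+3)) := by rw [id2]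
      _ = (m.choose (μ-1-j) * (m-μ)^(2*j+1)) * ((μ-1-j) * (μ+j+1) * (m-μ)^2) := by ring
      _ ≤ (m.choose (μ+j) * μ^(2*j+1)) * ((m-μ-j) * (m-μ+2+j) * μ^2) :=
          Nat.mul_le_mul ihj key
      _ = (m.choose (μ+j) * (m-μ-j)) * ((m-μ+2+j) * μ^(2*j+3)) := by ring
      _ = (m.choose (μ+j+1) * (μ+j+1)) * ((m-μ+2+j) * μ^(2*j+3)) := by rw [id1]
      _ = (μ+j+1) * (m-μ+2+j) * (m.choose (μ+j+1) * μ^(2*j+3)) := by ring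


lemma discrete_half (m μ : ℕ) (hμ : 1 ≤ μ) (h2 : 2*μ ≤ m) :
    binomCdf m ((μ:ℝ)/m) (μ-1) ≤ 1/2 := by
  have hm : 0 < m := by omega
  have hm' : (0:ℝ) < m := by exact_mod_cast hm
  set p : ℝ := (μ:ℝ)/m with hp
  have hμm : μ ≤ m := by omega
  have h1p : 1 - p = ((m-μ:ℕ):ℝ)/m := by
    rw [hp, Nat.cast_sub hμm]; field_simp
  set P : ℕ → ℝ := fun k => (m.choose k:ℝ) * p^k * (1-p)^(m-k) with hPdef
  have hPnn : ∀ k, 0 ≤ P k := by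
    intro k
    have hp0 : 0 ≤ p := by positivity
    have h1p0 : 0 ≤ 1 - p := by rw [h1p]; positivity
    positivity
  set Q : ℕ → ℕ := fun k => m.choose k * μ^k * (m-μ)^(m-k) with hQdef
  have hPQ : ∀ k, k ≤ m → P k = (Q k : ℝ)/ (m:ℝ)^m := by
    intro k hk
    simp only [hPdef, hQdef, hp, h1p]
    have hmm : (m:ℝ)^k * (m:ℝ)^(m-k) = (m:ℝ)^m := by
      rw [← pow_add]; congr 1; omega
    rw [show (1:ℝ) - μ/m = ((m-μ:ℕ):ℝ)/m from by rw [← hp]; exact h1p]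
    simp only [div_pow]
    rw [← hmm]
    field_simp
    norm_cast
  have hQle : ∀ j, j < μ → Q (μ-1-j) ≤ Q (μ+j) := by
    intro j hj
    have hnp := nat_pairing m μ hμ h2 j hj
    have e1 : m - (μ-1-j) = (m-μ-j) + (2*j+1) := by omega
    have e2 : μ + j = (μ-1-j) + (2*j+1) := by omega
    have e3 : m - (μ+j) = m-μ-j := by omega
    rw [hQdef]
    simp only
    rw [e1, e3, pow_add]
    calc m.choose (μ-1-j) * μ^(μ-1-j) * ((m-μ)^(m-μ-j) * (m-μ)^(2*j+1))
        = (m.choose (μ-1-j) * (m-μ)^(2*j+1)) * (μ^(μ-1-j) * (m-μ)^(m-μ-j)) := by ring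
      _ ≤ (m.choose (μ+j) * μ^(2*j+1)) * (μ^(μ-1-j) * (m-μ)^(m-μ-j)) :=
          Nat.mul_le_mul_right _ hnp
      _ = m.choose (μ+j) * (μ^(μ-1-j) * μ^(2*j+1)) * (m-μ)^(m-μ-j) := by ring
      _ = m.choose (μ+j) * μ^(μ+j) * (m-μ)^(m-μ-j) := by rw [← pow_add, ← e2]
  have hPle : ∀ j, j < μ → P (μ-1-j) ≤ P (μ+j) := by
    intro j hj
    rw [hPQ _ (by omega), hPQ _ (by omega)]
    have := hQle j hj
    have : (Q (μ-1-j) : ℝ) ≤ (Q (μ+j) : ℝ) := by exact_mod_cast this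
    apply div_le_div_of_nonneg_right this ?_ |>.trans_eq rfl
    positivity
  -- sums
  have htotal : ∑ i ∈ Finset.range (m+1), P i = 1 := by
    have := binomCdf_self m p
    rw [binomCdf] at this
    exact this
  have hsplit := Finset.sum_range_add_sum_Ico P (show μ ≤ m+1 by omega)
  have hreflect : ∑ i ∈ Finset.range μ, P i = ∑ j ∈ Finset.range μ, P (μ-1-j) :=
    (Finset.sum_range_reflect P μ).symm
  have hstep : ∑ j ∈ Finset.range μ, P (μ-1-j) ≤ ∑ j ∈ Finset.range μ, P (μ+j) :=
    Finset.sum_le_sum (fun j hj => hPle j (Finset.mem_range.mp hj))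
  have hico : ∑ j ∈ Finset.range μ, P (μ+j) = ∑ k ∈ Finset.Ico μ (2*μ), P k := by
    rw [Finset.sum_Ico_eq_sum_range, show 2*μ-μ = μ from by omega]
  have hsub : ∑ k ∈ Finset.Ico μ (2*μ), P k ≤ ∑ k ∈ Finset.Ico μ (m+1), P k := by
    apply Finset.sum_le_sum_of_subset_of_nonneg
    · apply Finset.Ico_subset_Ico le_rfl; omega
    · intro k _ _; exact hPnn k
  have hcdf : binomCdf m p (μ-1) = ∑ i ∈ Finset.range μ, P i := by
    rw [binomCdf, show μ-1+1 = μ from by omega]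
  rw [hcdf]
  have : ∑ i ∈ Finset.range μ, P i ≤ ∑ k ∈ Finset.Ico μ (m+1), P k := by
    calc ∑ i ∈ Finset.range μ, P i = ∑ j ∈ Finset.range μ, P (μ-1-j) := hreflect
      _ ≤ ∑ j ∈ Finset.range μ, P (μ+j) := hstep
      _ = ∑ k ∈ Finset.Ico μ (2*μ), P k := hico
      _ ≤ ∑ k ∈ Finset.Ico μ (m+1), P k := hsub
  linarith


-- choose identities in ℝ
lemma choose_id1 (n i : ℕ) (hi : i + 1 ≤ n) :
    ((n.choose (i+1) : ℝ)) * (i+1) = (n:ℝ) * ((n-1).choose i) := by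
  have h := Nat.add_one_mul_choose_eq (n-1) i
  have e : n - 1 + 1 = n := by omega
  rw [e] at h
  exact_mod_cast congrArg (Nat.cast : ℕ → ℝ) h.symm

lemma choose_id2 (n i : ℕ) (hi : i ≤ n - 1) (hn : 1 ≤ n) :
    ((n.choose i : ℝ)) * ((n:ℝ) - i) = (n:ℝ) * ((n-1).choose i) := by
  have h1 := Nat.choose_succ_right_eq n i
  have h2 := choose_id1 n i (by omega)
  have h1' : ((n.choose (i+1)):ℝ) * (i+1) = (n.choose i : ℝ) * ((n:ℕ) - i : ℕ) := by
    exact_mod_cast congrArg (Nat.cast : ℕ → ℝ) h1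
  rw [Nat.cast_sub (by omega)] at h1'
  rw [← h1', h2]

lemma cdf_hasDerivAt (n k : ℕ) (hk : k + 1 ≤ n) (p : ℝ) :
    HasDerivAt (fun q => binomCdf n q k)
      (-((n:ℝ) * ((n-1).choose k) * (p^k * (1-p)^(n-1-k)))) p := by
  set φ : ℕ → ℝ := fun i => (n:ℝ) * ((n-1).choose i) * (p^i * (1-p)^(n-1-i)) with hφ
  set ψ : ℕ → ℝ := fun i => if i = 0 then 0 else φ (i-1) with hψ
  have hterm : ∀ i ∈ Finset.range (k+1),
      HasDerivAt (fun q => (n.choose i : ℝ) * q ^ i * (1 - q) ^ (n - i)) (ψ i - φ i) p := by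
    intro i hi
    simp only [Finset.mem_range] at hi
    have hin : i ≤ n - 1 := by omega
    have h1 : HasDerivAt (fun q : ℝ => (1 - q) ^ (n - i)) (-((n:ℝ)-i) * (1-p)^(n-i-1)) p := by
      have hbase : HasDerivAt (fun q : ℝ => 1 - q) (-1) p := (hasDerivAt_id p).const_sub 1
      have := hbase.fun_pow (n - i)
      refine this.congr_deriv (Eq.symm ?_)
      have : ((n-i : ℕ):ℝ) = (n:ℝ) - i := by rw [Nat.cast_sub (by omega)]
      rw [this]; ring
    have h2 : HasDerivAt (fun q : ℝ => (n.choose i : ℝ) * q ^ i)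
        ((n.choose i : ℝ) * (i * p^(i-1))) p := by
      have := (hasDerivAt_pow i p).const_mul (n.choose i : ℝ)
      convert this using 1
      all_goals ring
    have h3 := h2.fun_mul h1
    refine h3.congr_deriv (Eq.symm ?_)
    rcases Nat.eq_zero_or_pos i with hi0 | hip
    · subst hi0
      simp only [hψ, hφ, if_pos rfl, Nat.choose_zero_right, Nat.sub_zero, Nat.cast_one,
        Nat.cast_zero, pow_zero]
      ring
    · have hine : i ≠ 0 := by omega
      simp only [hψ, hφ, if_neg hine]
      have e1 : (n:ℝ) * ((n-1).choose (i-1)) = (n.choose i : ℝ) * i := by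
        have h := choose_id1 n (i-1) (by omega)
        rw [show i - 1 + 1 = i from by omega] at h
        have hc : ((i-1:ℕ):ℝ) + 1 = (i:ℝ) := by
          rw [Nat.cast_sub (show 1 ≤ i by omega)]; ring
        rw [hc] at h
        exact h.symm
      have e2 : (n:ℝ) * ((n-1).choose i) = (n.choose i : ℝ) * ((n:ℝ) - i) :=
        (choose_id2 n i hin (by omega)).symm
      rw [e1, e2]
      rw [show n - 1 - (i-1) = n - i from by omega, show n - 1 - i = n - i - 1 from by omega]
      ring
  have hsum := HasDerivAt.fun_sum hterm
  have : ∑ i ∈ Finset.range (k+1), (ψ i - φ i) = -φ k := by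
    rw [Finset.sum_sub_distrib]
    have h1 : ∑ i ∈ Finset.range (k+1), ψ i = ∑ i ∈ Finset.range k, φ i := by
      rw [Finset.sum_range_succ']
      simp only [hψ, if_neg (Nat.succ_ne_zero _), if_pos rfl, Nat.add_sub_cancel, add_zero]
    have h2 : ∑ i ∈ Finset.range (k+1), φ i = ∑ i ∈ Finset.range k, φ i + φ k :=
      Finset.sum_range_succ φ k
    rw [h1, h2]; ring
  rw [this] at hsum
  exact hsum

lemma cdf_at_zero (n k : ℕ) : binomCdf n 0 k = 1 := by
  rw [binomCdf]
  rw [Finset.sum_eq_single 0]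
  · norm_num
  · intro i _ hine
    rw [zero_pow hine]; ring
  · intro h; simp at h

lemma rep (n k : ℕ) (hk : k + 1 ≤ n) (p : ℝ) :
    1 - binomCdf n p k
      = (n:ℝ) * ((n-1).choose k) * ∫ t in (0:ℝ)..p, t^k * (1-t)^(n-1-k) := by
  set A : ℝ := (n:ℝ) * ((n-1).choose k) with hA
  set f : ℝ → ℝ := fun t => t^k * (1-t)^(n-1-k) with hf
  have hfc : Continuous f := by
    apply Continuous.mul (continuous_pow k)
    exact (continuous_const.sub continuous_id).pow _
  set W : ℝ → ℝ := fun q => 1 - binomCdf n q k - A * ∫ t in (0:ℝ)..q, f t with hW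
  have hWd : ∀ q, HasDerivAt W 0 q := by
    intro q
    have h1 := cdf_hasDerivAt n k hk q
    have h2 : HasDerivAt (fun u => ∫ t in (0:ℝ)..u, f t) (f q) q := by
      apply intervalIntegral.integral_hasDerivAt_right
      · exact hfc.intervalIntegrable _ _
      · exact hfc.stronglyMeasurableAtFilter _ _
      · exact hfc.continuousAt
    have h3 := ((h1.const_sub 1).fun_sub ((h2.const_mul A)))
    refine h3.congr_deriv (Eq.symm ?_)
    simp only [hf, hA]
    ring
  have hconst := is_const_of_deriv_eq_zero (fun q => (hWd q).differentiableAt)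
    (fun q => (hWd q).deriv) p 0
  have hW0 : W 0 = 0 := by
    simp only [hW, cdf_at_zero, intervalIntegral.integral_same, mul_zero, sub_self, sub_zero]
  have : W p = 0 := by rw [hconst, hW0]
  simp only [hW] at this
  linarith

set_option maxHeartbeats 1000000 in
open Real in
lemma refl_pointwise (a b : ℕ) (ha : 1 ≤ a) (hab : a ≤ b + 1) (s : ℝ)
    (hs : 0 ≤ s) (hs' : s ≤ 1 - (b+1:ℝ)/(a+b+1)) :
    ((b+1:ℝ)/(a+b+1) + s)^b * (1 - ((b+1:ℝ)/(a+b+1) + s))^a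
      ≤ ((b+1:ℝ)/(a+b+1) - s)^b * (1 - ((b+1:ℝ)/(a+b+1) - s))^a := by
  set m : ℝ := (a:ℝ)+b+1 with hm
  have hm0 : 0 < m := by positivity
  set c : ℝ := (b+1:ℝ)/m with hc
  have hcm : c * m = b + 1 := by rw [hc]; field_simp
  have h1cm : (1 - c) * m = a := by rw [hc]; field_simp; ring
  have hc1 : c < 1 := by
    rw [hc, div_lt_one hm0, hm]
    have : (1:ℝ) ≤ a := by exact_mod_cast ha
    linarith
  have hhalf : (1:ℝ)/2 ≤ c := by
    rw [hc, le_div_iff₀ hm0, hm]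
    have : (a:ℝ) ≤ b + 1 := by exact_mod_cast hab
    linarith
  have h1c0 : 0 < 1 - c := by linarith
  rcases eq_or_lt_of_le hs' with heq | hlt
  · subst heq
    have e1 : 1 - (c + (1 - c)) = 0 := by ring
    rw [e1, zero_pow (by omega : a ≠ 0), mul_zero]
    apply mul_nonneg
    · apply pow_nonneg; linarith
    · apply pow_nonneg
      have : 1 - (c - (1 - c)) = 2*(1-c) := by ring
      rw [this]; linarith
  · have ha_eq : (a:ℝ) = (1-c)*m := h1cm.symm
    have hb_eq : (b:ℝ) = c*m - 1 := by linarith [hcm]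
    have h2c : 0 ≤ 2*c - 1 := by linarith
    have hc0 : (0:ℝ) ≤ c := by linarith
    have key : ∀ x : ℝ, 0 ≤ x → x ≤ 1 - c →
        (b:ℝ)*(2*c)*((1-c)^2 - x^2) ≤ (a:ℝ)*(2*(1-c))*(c^2 - x^2) := by
      intro x hx0 hx1
      have hx2 : x^2 ≤ (1-c)^2 := by nlinarith
      nlinarith [mul_nonneg (mul_nonneg hm0.le (sq_nonneg x)) h2c,
        mul_nonneg hc0 (sub_nonneg.mpr hx2)]
    have hder : ∀ x ∈ Set.Icc 0 s, HasDerivAt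
        (fun x => (b:ℝ) * (Real.log (c - x) - Real.log (c + x))
          + (a:ℝ) * (Real.log (1 - c + x) - Real.log (1 - c - x)))
        ((b:ℝ) * ((-1)/(c - x) - 1/(c + x))
          + (a:ℝ) * (1/(1 - c + x) - (-1)/(1 - c - x))) x := by
      intro x hx
      obtain ⟨hx0, hxs⟩ := hx
      have hcx : 0 < c - x := by nlinarith
      have hcx2 : 0 < c + x := by nlinarith
      have hw : 0 < 1 - c + x := by nlinarith
      have hz : 0 < 1 - c - x := by nlinarith
      have l1 : HasDerivAt (fun y : ℝ => Real.log (c - y)) ((-1)/(c-x)) x :=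
        ((hasDerivAt_id x).const_sub c).log (by simp only [id_eq]; linarith)
      have l2 : HasDerivAt (fun y : ℝ => Real.log (c + y)) (1/(c+x)) x := by
        have := ((hasDerivAt_id x).const_add c).log
          (show c + id x ≠ 0 by simp only [id_eq]; linarith)
        simpa using this
      have l3 : HasDerivAt (fun y : ℝ => Real.log (1 - c + y)) (1/(1-c+x)) x := by
        have := ((hasDerivAt_id x).const_add (1-c)).log
          (show 1 - c + id x ≠ 0 by simp only [id_eq]; linarith)
        simpa using this
      have l4 : HasDerivAt (fun y : ℝ => Real.log (1 - c - y)) ((-1)/(1-c-x)) x :=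
        ((hasDerivAt_id x).const_sub (1-c)).log (by simp only [id_eq]; linarith)
      exact ((l1.sub l2).const_mul _).add ((l3.sub l4).const_mul _)
    have hmono : MonotoneOn (fun x => (b:ℝ) * (Real.log (c - x) - Real.log (c + x))
          + (a:ℝ) * (Real.log (1 - c + x) - Real.log (1 - c - x))) (Set.Icc 0 s) := by
      apply monotoneOn_of_deriv_nonneg (convex_Icc 0 s)
      · intro x hx; exact (hder x hx).continuousAt.continuousWithinAt
      · intro x hx
        rw [interior_Icc] at hx
        exact ((hder x ⟨le_of_lt hx.1, le_of_lt hx.2⟩).differentiableAt).differentiableWithinAt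
      · intro x hx
        rw [interior_Icc] at hx
        obtain ⟨hx0, hxs⟩ := hx
        rw [(hder x ⟨le_of_lt hx0, le_of_lt hxs⟩).deriv]
        have hcx : 0 < c - x := by nlinarith
        have hcx2 : 0 < c + x := by nlinarith
        have hw : 0 < 1 - c + x := by nlinarith
        have hz : 0 < 1 - c - x := by nlinarith
        have hkey := key x (le_of_lt hx0) (by linarith)
        have expr : (b:ℝ) * ((-1)/(c - x) - 1/(c + x))
              + (a:ℝ) * (1/(1 - c + x) - (-1)/(1 - c - x))
            = ((a:ℝ)*(2*(1-c))*((c-x)*(c+x)) - (b:ℝ)*(2*c)*((1-c+x)*(1-c-x)))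
            / ((c-x)*(c+x)*((1-c+x)*(1-c-x))) := by
          field_simp
          ring
        rw [expr]
        apply div_nonneg _ (by positivity)
        nlinarith
    have hgs := hmono (Set.left_mem_Icc.mpr hs) (Set.right_mem_Icc.mpr hs) hs
    simp only at hgs
    have h0 : (b:ℝ) * (Real.log (c - 0) - Real.log (c + 0))
          + (a:ℝ) * (Real.log (1 - c + 0) - Real.log (1 - c - 0)) = 0 := by
      norm_num
    rw [h0] at hgs
    have hcs : 0 < c - s := by nlinarith
    have hcs2 : 0 < c + s := by nlinarith
    have hws : 0 < 1 - c + s := by nlinarith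
    have hzs : 0 < 1 - c - s := by nlinarith
    have e1 : (1 : ℝ) - (c + s) = 1 - c - s := by ring
    have e2 : (1 : ℝ) - (c - s) = 1 - c + s := by ring
    rw [e1, e2]
    rw [← Real.log_le_log_iff (by positivity) (by positivity)]
    rw [Real.log_mul (by positivity) (by positivity), Real.log_mul (by positivity) (by positivity)]
    rw [Real.log_pow, Real.log_pow, Real.log_pow, Real.log_pow]
    linarith


lemma fcont (a b : ℕ) : Continuous (fun t : ℝ => t^b * (1-t)^a) :=
  (continuous_pow b).mul ((continuous_const.sub continuous_id).pow a)

lemma M1 (a b : ℕ) (ha : 1 ≤ a) :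
    (∫ t in (0:ℝ)..1, t^b * (1-t)^a)
      ≤ 2 * ∫ t in (0:ℝ)..((b+1:ℝ)/((a:ℝ)+b+1)), t^b * (1-t)^a := by
  set f : ℝ → ℝ := fun t => t^b * (1-t)^a with hf
  have hfc : Continuous f := fcont a b
  set c : ℝ := (b+1:ℝ)/((a:ℝ)+b+1) with hc
  have hm0 : (0:ℝ) < (a:ℝ)+b+1 := by positivity
  have hc0 : 0 < c := by positivity
  have hc1 : c < 1 := by
    rw [hc, div_lt_one hm0]
    have : (1:ℝ) ≤ a := by exact_mod_cast ha
    linarith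
  rcases le_or_gt ((a:ℕ)) (b+1) with hab | hab
  · -- analytic case
    have hhalf : (1:ℝ)/2 ≤ c := by
      rw [hc, le_div_iff₀ hm0]
      have : (a:ℝ) ≤ b + 1 := by exact_mod_cast hab
      linarith
    have i1 : (∫ t in (0:ℝ)..1, f t)
        = (∫ t in (0:ℝ)..c, f t) + ∫ t in c..1, f t :=
      (intervalIntegral.integral_add_adjacent_intervals
        (hfc.intervalIntegrable _ _) (hfc.intervalIntegrable _ _)).symm
    have i2 : (∫ t in c..1, f t) = ∫ s in (0:ℝ)..(1-c), f (c + s) := by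
      rw [intervalIntegral.integral_comp_add_left f c]
      norm_num
    have i3 : (∫ s in (0:ℝ)..(1-c), f (c + s)) ≤ ∫ s in (0:ℝ)..(1-c), f (c - s) := by
      apply intervalIntegral.integral_mono_on (by linarith)
      · exact (hfc.comp (continuous_const.add continuous_id)).intervalIntegrable _ _
      · exact (hfc.comp (continuous_const.sub continuous_id)).intervalIntegrable _ _
      · intro s hs
        exact refl_pointwise a b ha hab s hs.1 hs.2
    have i4 : (∫ s in (0:ℝ)..(1-c), f (c - s)) = ∫ t in (2*c-1)..c, f t := by
      rw [intervalIntegral.integral_comp_sub_left f c]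
      norm_num
      rw [show c - (1-c) = 2*c-1 by ring]
    have i5 : (∫ t in (2*c-1)..c, f t) ≤ ∫ t in (0:ℝ)..c, f t := by
      have hsplit : (∫ t in (0:ℝ)..(2*c-1), f t) + ∫ t in (2*c-1)..c, f t
          = ∫ t in (0:ℝ)..c, f t :=
        intervalIntegral.integral_add_adjacent_intervals
          (hfc.intervalIntegrable _ _) (hfc.intervalIntegrable _ _)
      have hnn : 0 ≤ ∫ t in (0:ℝ)..(2*c-1), f t := by
        apply intervalIntegral.integral_nonneg (by linarith)
        intro u hu
        obtain ⟨hu0, hu1⟩ := hu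
        have : u ≤ 1 := by linarith
        apply mul_nonneg (pow_nonneg hu0 _) (pow_nonneg (by linarith) _)
      linarith
    calc (∫ t in (0:ℝ)..1, f t) = (∫ t in (0:ℝ)..c, f t) + ∫ t in c..1, f t := i1
      _ ≤ (∫ t in (0:ℝ)..c, f t) + ∫ t in (0:ℝ)..c, f t := by
          have := (i2.trans_le i3).trans_eq i4
          linarith [this.trans i5]
      _ = 2 * ∫ t in (0:ℝ)..c, f t := by ring
  · -- discrete case: b + 1 < a
    set m : ℕ := a + b + 1 with hmdef
    set μ : ℕ := b + 1 with hμdef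
    have hμ1 : 1 ≤ μ := by omega
    have h2μ : 2*μ ≤ m := by omega
    have hdh := discrete_half m μ hμ1 h2μ
    have hbm : b + 1 ≤ m := by omega
    have hrep := rep m b hbm ((μ:ℝ)/m)
    have hrep1 := rep m b hbm 1
    rw [binomCdf_one m b (by omega)] at hrep1
    have hμm : μ - 1 = b := by omega
    rw [hμm] at hdh
    have hma : m - 1 - b = a := by omega
    rw [hma] at hrep hrep1
    have hcast : ((μ:ℝ))/((m:ℝ)) = c := by
      rw [hc, hμdef, hmdef]; push_cast; ring_nf
    rw [hcast] at hrep hdh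
    set X : ℝ := (m:ℝ) * ((m-1).choose b) with hX
    have hX0 : 0 < X := by
      rw [hX]
      apply mul_pos (by positivity)
      exact_mod_cast Nat.choose_pos (show b ≤ m - 1 by omega)
    have h1 : 1/2 ≤ X * ∫ t in (0:ℝ)..c, f t := by
      rw [hf, ← hrep]; linarith
    have h2 : X * ∫ t in (0:ℝ)..1, f t = 1 := by
      rw [hf, ← hrep1]; ring
    have := mul_le_mul_of_nonneg_left (le_refl (∫ t in (0:ℝ)..c, f t)) hX0.le
    nlinarith [h1, h2, hX0]


lemma fnonneg (a b : ℕ) {t : ℝ} (h0 : 0 ≤ t) (h1 : t ≤ 1) : 0 ≤ t^b * (1-t)^a :=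
  mul_nonneg (pow_nonneg h0 _) (pow_nonneg (by linarith) _)

lemma M2 (a b : ℕ) :
    (2:ℝ) * (∫ t in (0:ℝ)..((b:ℝ)/((a:ℝ)+b+1)), t^b * (1-t)^a)
      ≤ ∫ t in (0:ℝ)..1, t^b * (1-t)^a := by
  rcases Nat.eq_zero_or_pos b with hb0 | hb1
  · subst hb0
    simp only [Nat.cast_zero, zero_div, intervalIntegral.integral_same, mul_zero]
    apply intervalIntegral.integral_nonneg zero_le_one
    intro u hu; exact fnonneg a 0 hu.1 hu.2
  · set m : ℝ := (a:ℝ)+b+1 with hm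
    have hm0 : (0:ℝ) < m := by positivity
    set d : ℝ := (b:ℝ)/m with hd
    have hd0 : 0 ≤ d := by positivity
    have hd1 : d < 1 := by
      rw [hd, div_lt_one hm0, hm]; push_cast; linarith [Nat.cast_nonneg (α := ℝ) a]
    set f : ℝ → ℝ := fun t => t^b * (1-t)^a with hf
    set g : ℝ → ℝ := fun t => t^a * (1-t)^b with hg
    have hgc : Continuous g := fcont b a
    have hrefl : ∀ r : ℝ, (∫ t in (0:ℝ)..r, f t) = ∫ t in (1-r)..1, g t := by
      intro r
      have : ∀ x : ℝ, f x = g (1 - x) := by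
        intro x; rw [hf, hg]; simp only [sub_sub_cancel]; ring
      calc (∫ t in (0:ℝ)..r, f t) = ∫ t in (0:ℝ)..r, g (1 - t) := by
            apply intervalIntegral.integral_congr; intro x _; exact this x
        _ = ∫ t in (1-r)..(1-0:ℝ), g t := intervalIntegral.integral_comp_sub_left g 1
        _ = ∫ t in (1-r)..1, g t := by norm_num
    have htot : (∫ t in (0:ℝ)..1, f t) = ∫ t in (0:ℝ)..1, g t := by
      rw [hrefl 1]; norm_num
    have hM1 := M1 b a hb1
    have hcast : ((a:ℝ)+1)/((b:ℝ)+a+1) = 1 - d := by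
      rw [hd, hm]; field_simp; ring
    rw [hcast] at hM1
    have hsplit : (∫ t in (0:ℝ)..(1-d), g t) + ∫ t in (1-d)..1, g t = ∫ t in (0:ℝ)..1, g t :=
      intervalIntegral.integral_add_adjacent_intervals
        (hgc.intervalIntegrable _ _) (hgc.intervalIntegrable _ _)
    rw [hrefl d, htot]
    linarith

theorem stmt_7 (n : ℕ) (p : ℝ) (hn : 1 ≤ n) (hp : p ∈ Set.Icc (0:ℝ) 1)
    (kmed : ℕ) (hkmed : kmed = sInf {k : ℕ | 1/2 ≤ binomCdf n p k}) :
    |(kmed : ℝ) - n * p| ≤ 1 := by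
  obtain ⟨hp0, hp1⟩ := hp
  have hn0 : (0:ℝ) < n := by exact_mod_cast hn
  have hnS : n ∈ {k : ℕ | 1/2 ≤ binomCdf n p k} := by
    simp only [Set.mem_setOf_eq, binomCdf_self]; norm_num
  have hne : Set.Nonempty {k : ℕ | 1/2 ≤ binomCdf n p k} := ⟨n, hnS⟩
  have hkm : kmed ∈ {k : ℕ | 1/2 ≤ binomCdf n p k} := hkmed ▸ Nat.sInf_mem hne
  have hkn : kmed ≤ n := hkmed ▸ Nat.sInf_le hnS
  have hmem : 1/2 ≤ binomCdf n p kmed := hkm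
  have hXpos : ∀ k : ℕ, k ≤ n - 1 → (0:ℝ) < (n:ℝ) * ((n-1).choose k) := by
    intro k hk
    apply mul_pos hn0
    exact_mod_cast Nat.choose_pos hk
  have hupper : (kmed:ℝ) - n*p ≤ 1 := by
    rcases Nat.eq_zero_or_pos kmed with h0 | h1
    · rw [h0]; push_cast; nlinarith
    · set j := kmed - 1 with hj
      have hjS : j ∉ {k : ℕ | 1/2 ≤ binomCdf n p k} := by
        apply Nat.notMem_of_lt_sInf
        rw [← hkmed]; omega
      have hFj : binomCdf n p j < 1/2 := by
        by_contra hcon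
        exact hjS (le_of_not_gt hcon)
      have hclaim : ¬ ((n:ℝ)*p ≤ j) := by
        intro hle
        have hjn : j + 1 ≤ n := by omega
        have hpj : p ≤ (j:ℝ)/n := by rw [le_div_iff₀ hn0]; nlinarith
        have hjn1 : (0:ℝ) ≤ (j:ℝ)/n := by positivity
        have hjnle : (j:ℝ)/n ≤ 1 := by
          rw [div_le_one hn0]; exact_mod_cast Nat.le_of_lt_succ (by omega)
        set f : ℝ → ℝ := fun t => t^j * (1-t)^(n-1-j) with hf
        have hfc : Continuous f := fcont (n-1-j) j
        have hmono : (∫ t in (0:ℝ)..p, f t) ≤ ∫ t in (0:ℝ)..((j:ℝ)/n), f t := by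
          have hsplit : (∫ t in (0:ℝ)..p, f t) + ∫ t in p..((j:ℝ)/n), f t
              = ∫ t in (0:ℝ)..((j:ℝ)/n), f t :=
            intervalIntegral.integral_add_adjacent_intervals
              (hfc.intervalIntegrable _ _) (hfc.intervalIntegrable _ _)
          have hnn : 0 ≤ ∫ t in p..((j:ℝ)/n), f t := by
            apply intervalIntegral.integral_nonneg hpj
            intro u hu
            exact fnonneg _ _ (le_trans hp0 hu.1) (le_trans hu.2 hjnle)
          linarith
        have hcast : ((j:ℝ))/(((n-1-j : ℕ) : ℝ) + (j:ℝ) + 1) = (j:ℝ)/(n:ℝ) := by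
          congr 1
          rw [Nat.cast_sub (show j ≤ n - 1 by omega), Nat.cast_sub (show 1 ≤ n by omega)]
          push_cast; ring
        have hM2 := M2 (n-1-j) j
        rw [hcast] at hM2
        have hrepp := rep n j hjn p
        have hrep1 := rep n j hjn 1
        rw [binomCdf_one n j (by omega)] at hrep1
        have hX := hXpos j (by omega)
        rw [← hf] at hrepp hrep1
        nlinarith
      push_neg at hclaim
      have hcast : (kmed:ℝ) = (j:ℝ) + 1 := by
        rw [hj]; rw [Nat.cast_sub (by omega)]; push_cast; ring
      rw [hcast]; linarith
  have hlower : (n:ℝ)*p - kmed ≤ 1 := by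
    rcases eq_or_lt_of_le hkn with heq | hlt
    · rw [heq]; nlinarith
    · by_contra hcon
      push_neg at hcon
      have hgt : (kmed:ℝ) + 1 < n*p := by linarith
      rcases eq_or_lt_of_le (show kmed + 1 ≤ n by omega) with hkn1 | hkn2
      · -- kmed = n - 1 : then n < n*p, p > 1 contradiction
        have : ((kmed:ℝ) + 1) = n := by exact_mod_cast congrArg (Nat.cast (R := ℝ)) hkn1
        nlinarith
      · -- kmed ≤ n - 2
        have ha1 : 1 ≤ n - 1 - kmed := by omega
        set c : ℝ := ((kmed:ℝ)+1)/n with hc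
        have hcp : c < p := by
          rw [hc, div_lt_iff₀ hn0]; nlinarith
        have hc0 : 0 < c := by positivity
        set f : ℝ → ℝ := fun t => t^kmed * (1-t)^(n-1-kmed) with hf
        have hfc : Continuous f := fcont (n-1-kmed) kmed
        have hsplit : (∫ t in (0:ℝ)..c, f t) + ∫ t in c..p, f t = ∫ t in (0:ℝ)..p, f t :=
          intervalIntegral.integral_add_adjacent_intervals
            (hfc.intervalIntegrable _ _) (hfc.intervalIntegrable _ _)
        have hcast : ((kmed:ℝ)+1)/((((n-1-kmed : ℕ)) : ℝ) + (kmed:ℝ) + 1) = c := by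
          rw [hc]
          congr 1
          rw [Nat.cast_sub (show kmed ≤ n - 1 by omega), Nat.cast_sub (show 1 ≤ n by omega)]
          push_cast; ring
        have hM1 := M1 (n-1-kmed) kmed ha1
        rw [hcast] at hM1
        have hpos : 0 < ∫ t in c..p, f t := by
          apply intervalIntegral.intervalIntegral_pos_of_pos_on
            (hfc.intervalIntegrable _ _)
          · intro x hx
            obtain ⟨hx1, hx2⟩ := hx
            apply mul_pos (pow_pos (by linarith) _)
            apply pow_pos; nlinarith
          · exact hcp
        have hrepp := rep n kmed (by omega) p
        have hrep1 := rep n kmed (by omega) 1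
        rw [binomCdf_one n kmed (by omega)] at hrep1
        have hX := hXpos kmed (by omega)
        rw [← hf] at hrepp hrep1
        nlinarith
  rw [abs_le]; constructor <;> linarith
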